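/- Let (A,·,∘) be a transposed Novikov-Poisson algebra with ∘ not identically zero. Then the span of all products A∘A is an ideal of (A,·); consequently, if A∘A ≠ A then A∘A is a non-trivial ideal of (A,·,∘), so (A,·,∘) is not simple. In particular, every non-trivial simple transposed Novikov-Poisson algebra satisfies A∘A = A. -/
import Mathlib


/-- In a transposed Novikov-Poisson algebra with ∘ ≠ 0, the span
of all ∘-products is an ideal of (A,·); if A∘A ≠ A it is a non-trivial ideal of
(A,·,∘), so the algebra is not simple; hence every non-trivial simple
transposed Novikov-Poisson algebra satisfies A∘A = A. -/
theorem stmt18 {k A : Type*} [Field k] [AddCommGroup A] [Module k A]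
    (hchar : (2:k) ≠ 0)
    (mul cir : A →ₗ[k] A →ₗ[k] A)
    (hcomm : ∀ x y : A, mul x y = mul y x)
    (hassoc : ∀ x y z : A, mul (mul x y) z = mul x (mul y z))
    (hnov1 : ∀ x y z : A, cir (cir x y) z = cir (cir x z) y)
    (hnov2 : ∀ x y z : A, cir (cir x y) z - cir x (cir y z) = cir (cir y x) z - cir y (cir x z))
    (htnp1 : ∀ x y z : A, cir (mul x y) z = cir (mul x z) y)
    (htnp2 : ∀ x y z : A, (2:k) • mul z (cir x y) = cir (mul z x) y + cir x (mul z y))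
    (hcir : ∃ x y : A, cir x y ≠ 0) :
    (∀ a ∈ Submodule.span k {z : A | ∃ x y : A, cir x y = z}, ∀ w : A,
      mul w a ∈ Submodule.span k {z : A | ∃ x y : A, cir x y = z}) ∧
    (Submodule.span k {z : A | ∃ x y : A, cir x y = z} ≠ ⊤ →
      ∃ I : Submodule k A,
        (∀ a ∈ I, ∀ w : A, mul w a ∈ I) ∧
        (∀ a ∈ I, ∀ w : A, cir w a ∈ I ∧ cir a w ∈ I) ∧
        I ≠ ⊥ ∧ I ≠ ⊤) ∧
    ((∃ x y : A, mul x y ≠ 0) →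
      (∀ I : Submodule k A,
        (∀ a ∈ I, ∀ w : A, mul w a ∈ I) →
        (∀ a ∈ I, ∀ w : A, cir w a ∈ I ∧ cir a w ∈ I) →
        I = ⊥ ∨ I = ⊤) →
      Submodule.span k {z : A | ∃ x y : A, cir x y = z} = ⊤) := by

  set S := Submodule.span k {z : A | ∃ x y : A, cir x y = z} with hS
  have hgen : ∀ x y : A, cir x y ∈ S := fun x y => Submodule.subset_span ⟨x, y, rfl⟩
  have hmulS : ∀ a ∈ S, ∀ w : A, mul w a ∈ S := by
    intro a ha w
    induction ha using Submodule.span_induction with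
    | mem z hz =>
      obtain ⟨x, y, rfl⟩ := hz
      have h2 := htnp2 x y w
      have heq : mul w (cir x y) = (2:k)⁻¹ • (cir (mul w x) y + cir x (mul w y)) := by
        rw [← h2, smul_smul, inv_mul_cancel₀ hchar, one_smul]
      rw [heq]
      exact S.smul_mem _ (S.add_mem (hgen _ _) (hgen _ _))
    | zero => simp
    | add u v _ _ hu hv => rw [map_add]; exact S.add_mem hu hv
    | smul c u _ hu => rw [map_smul]; exact S.smul_mem c hu
  have hcirS : ∀ a ∈ S, ∀ w : A, cir w a ∈ S ∧ cir a w ∈ S :=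
    fun a _ w => ⟨hgen w a, hgen a w⟩
  have hne_bot : S ≠ ⊥ := by
    obtain ⟨x, y, hxy⟩ := hcir
    intro h
    exact hxy ((Submodule.mem_bot k).mp (h ▸ hgen x y))
  refine ⟨hmulS, fun hne => ⟨S, hmulS, hcirS, hne_bot, hne⟩, fun _ hsimp => ?_⟩
  rcases hsimp S hmulS hcirS with h | h
  · exact absurd h hne_bot
  · exact h
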